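/- Let T be a miss hyperspace topology (a topology on the powerset of X with a base of sets of the form ↓G = {A | A ⊆ G}) and 𝒮 an ideal. Then for every collection ℬ, cl^T(cl_{τ(𝒮)}(ℬ)) ⊆ cl_𝒮^T(ℬ) ⊆ cl_{τ(𝒮)}(cl^T(ℬ)), where cl_𝒮^T(ℬ) = {A | ∀ S ∈ 𝒮, A ∈ cl^T({B ∩ S | B ∈ ℬ})}. -/

import Mathlib

open Set Topology

def IsIdeal {X : Type*} (𝒮 : Set (Set X)) : Prop :=
  ∅ ∈ 𝒮 ∧ (∀ S ∈ 𝒮, ∀ S' ⊆ S, S' ∈ 𝒮) ∧ (∀ S ∈ 𝒮, ∀ S' ∈ 𝒮, S ∪ S' ∈ 𝒮)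

def tauS {X : Type*} (𝒮 : Set (Set X)) : TopologicalSpace (Set X) :=
  TopologicalSpace.generateFrom
    {U | ∃ S ∈ 𝒮, ∃ S' ∈ 𝒮, U = {C : Set X | S ⊆ C ∧ C ∩ S' = ∅}}

def upperModCl {X : Type*} (𝒮 : Set (Set X)) (T : TopologicalSpace (Set X))
    (𝒜 : Set (Set X)) : Set (Set X) :=
  {A | ∀ S ∈ 𝒮, A ∈ @closure (Set X) T {B' : Set X | ∃ B ∈ 𝒜, B' = B ∩ S}}

/-- Given a finite subcollection `f` of the generators containing `A`, we can find a single
generator `[S, S']` containing `A` and contained in `⋂₀ f`. -/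
lemma exists_single_generator {X : Type*} {𝒮 : Set (Set X)} (hS : IsIdeal 𝒮)
    {A : Set X} {f : Set (Set (Set X))} (hf : f.Finite)
    (hfs : f ⊆ {U | ∃ S ∈ 𝒮, ∃ S' ∈ 𝒮, U = {C : Set X | S ⊆ C ∧ C ∩ S' = ∅}})
    (hA : A ∈ ⋂₀ f) :
    ∃ S ∈ 𝒮, ∃ S' ∈ 𝒮, S ⊆ A ∧ A ∩ S' = ∅ ∧
      {C : Set X | S ⊆ C ∧ C ∩ S' = ∅} ⊆ ⋂₀ f := by
  refine Set.Finite.induction_on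
    (motive := fun f _ => f ⊆ {U | ∃ S ∈ 𝒮, ∃ S' ∈ 𝒮, U = {C : Set X | S ⊆ C ∧ C ∩ S' = ∅}} →
      A ∈ ⋂₀ f →
      ∃ S ∈ 𝒮, ∃ S' ∈ 𝒮, S ⊆ A ∧ A ∩ S' = ∅ ∧
        {C : Set X | S ⊆ C ∧ C ∩ S' = ∅} ⊆ ⋂₀ f)
    f hf ?_ ?_ hfs hA
  · intro _ _
    exact ⟨∅, hS.1, ∅, hS.1, empty_subset _, inter_empty _, fun C _ => by simp⟩
  · rintro u f - - ih hfs' hA'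
    obtain ⟨S₀, hS₀, S₀', hS₀', rfl⟩ := hfs' (mem_insert u f)
    obtain ⟨S, hSm, S', hS'm, hSA, hAS', hsub⟩ :=
      ih (fun v hv => hfs' (mem_insert_of_mem _ hv)) (fun v hv => hA' v (mem_insert_of_mem _ hv))
    have hAu := hA' _ (mem_insert _ f)
    refine ⟨S ∪ S₀, hS.2.2 _ hSm _ hS₀, S' ∪ S₀', hS.2.2 _ hS'm _ hS₀',
      union_subset hSA hAu.1, ?_, ?_⟩
    · rw [inter_union_distrib_left, hAS', hAu.2, union_empty]
    · rintro C ⟨hC1, hC2⟩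
      rw [inter_union_distrib_left, union_empty_iff] at hC2
      intro v hv
      rcases hv with rfl | hv
      · exact ⟨(subset_union_right).trans hC1, hC2.2⟩
      · exact hsub ⟨(subset_union_left).trans hC1, hC2.1⟩ v hv

theorem stmt_17 {X : Type*} (𝒮 : Set (Set X)) (hS : IsIdeal 𝒮)
    (T : TopologicalSpace (Set X))
    (hmiss : @TopologicalSpace.IsTopologicalBasis (Set X) T
      {𝒢 : Set (Set X) | ∃ G : Set X, 𝒢 = {A : Set X | A ⊆ G}}) :
    ∀ ℬ : Set (Set X),
      @closure (Set X) T (@closure (Set X) (tauS 𝒮) ℬ) ⊆ upperModCl 𝒮 T ℬ ∧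
      upperModCl 𝒮 T ℬ ⊆ @closure (Set X) (tauS 𝒮) (@closure (Set X) T ℬ) := by
  intro ℬ
  have hbasis : @TopologicalSpace.IsTopologicalBasis (Set X) (tauS 𝒮)
      ((fun f => ⋂₀ f) '' { f : Set (Set (Set X)) | f.Finite ∧
        f ⊆ {U | ∃ S ∈ 𝒮, ∃ S' ∈ 𝒮, U = {C : Set X | S ⊆ C ∧ C ∩ S' = ∅}} }) :=
    @TopologicalSpace.isTopologicalBasis_of_subbasis _ (tauS 𝒮) _ rfl
  constructor
  · -- first inclusion
    intro A hA S hSm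
    refine (@TopologicalSpace.IsTopologicalBasis.mem_closure_iff _ T _ hmiss _ A).mpr ?_
    rintro _ ⟨G, rfl⟩ hAG
    obtain ⟨C, hCG, hC⟩ :=
      (@TopologicalSpace.IsTopologicalBasis.mem_closure_iff _ T _ hmiss _ A).mp hA
        _ ⟨G, rfl⟩ hAG
    -- C ∈ tauS-closure ℬ; use the open [∅, S \ C]
    have hSC : S \ C ∈ 𝒮 := hS.2.1 _ hSm _ diff_subset
    have hopen : @IsOpen (Set X) (tauS 𝒮) {D : Set X | ∅ ⊆ D ∧ D ∩ (S \ C) = ∅} :=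
      TopologicalSpace.GenerateOpen.basic _ ⟨∅, hS.1, S \ C, hSC, rfl⟩
    obtain ⟨B, ⟨-, hBSC⟩, hBℬ⟩ :=
      (@mem_closure_iff (Set X) (tauS 𝒮) C ℬ).mp hC _ hopen ⟨empty_subset _, by simp⟩
    refine ⟨B ∩ S, fun x hx => ?_, B, hBℬ, rfl⟩
    by_cases hxC : x ∈ C
    · exact hCG hxC
    · exfalso
      have hmem : x ∈ B ∩ (S \ C) := ⟨hx.1, hx.2, hxC⟩
      rw [hBSC] at hmem
      exact hmem
  · -- second inclusion
    intro A hA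
    refine (@TopologicalSpace.IsTopologicalBasis.mem_closure_iff _ (tauS 𝒮) _ hbasis _ A).mpr ?_
    rintro _ ⟨f, ⟨hf, hfs⟩, rfl⟩ hAf
    obtain ⟨S, hSm, S', hS'm, hSA, hAS', hsub⟩ := exists_single_generator hS hf hfs hAf
    have hSS' : S ∪ S' ∈ 𝒮 := hS.2.2 _ hSm _ hS'm
    obtain ⟨_, hsubA, B, hBℬ, rfl⟩ :=
      (@TopologicalSpace.IsTopologicalBasis.mem_closure_iff _ T _ hmiss _ A).mp (hA _ hSS')
        _ ⟨A, rfl⟩ (subset_refl A)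
    -- B ∩ (S ∪ S') ⊆ A
    refine ⟨B ∪ S, hsub ⟨subset_union_right, ?_⟩, ?_⟩
    · rw [union_inter_distrib_right]
      have h1 : B ∩ S' = ∅ := by
        rw [← subset_empty_iff, ← hAS']
        exact fun x hx => ⟨hsubA ⟨hx.1, Or.inr hx.2⟩, hx.2⟩
      have h2 : S ∩ S' = ∅ := by
        rw [← subset_empty_iff, ← hAS']
        exact fun x hx => ⟨hSA hx.1, hx.2⟩
      rw [h1, h2, union_empty]
    · refine (@TopologicalSpace.IsTopologicalBasis.mem_closure_iff _ T _ hmiss _ (B ∪ S)).mpr ?_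
      rintro _ ⟨G, rfl⟩ hBG
      exact ⟨B, fun x hx => hBG (Or.inl hx), hBℬ⟩
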